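/- Let n ≡ 3 (mod 4) be a positive integer and G(x,y) = ax² + bxy + cy² a primitive positive definite binary quadratic form of discriminant -n with gcd(c, n) = 1. Then there is an integer k such that the substituted form with coefficients a' = a+bk+ck², b' = b+2kc, c satisfies n ∣ b' and n ∣ a'. -/
import Mathlib


theorem reduce_disc_n (n a b c : ℤ) (hn : 0 < n) (hn4 : n % 4 = 3) (ha : 0 < a)
    (hdisc : b ^ 2 - 4 * a * c = -n)
    (hprim : Int.gcd a (Int.gcd b c) = 1)
    (hc : Int.gcd c n = 1) :
    ∃ k : ℤ, n ∣ b + 2 * k * c ∧ n ∣ a + b * k + c * k ^ 2 := by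
  have hc' : IsCoprime c n := Int.isCoprime_iff_gcd_eq_one.mpr hc
  have h2 : IsCoprime (2 : ℤ) n := ⟨-((n - 1) / 2), 1, by omega⟩
  have h2c : IsCoprime (2 * c) n := h2.mul_left hc'
  obtain ⟨u, v, huv⟩ := id h2c
  refine ⟨-b * u, ?_, ?_⟩
  · have : b + 2 * (-b * u) * c = b * (v * n) := by linear_combination (-b) * huv
    rw [this]; exact ⟨b * v, by ring⟩
  · have hb' : n ∣ b + 2 * (-b * u) * c := by
      have : b + 2 * (-b * u) * c = b * (v * n) := by linear_combination (-b) * huv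
      rw [this]; exact ⟨b * v, by ring⟩
    set k := -b * u with hk
    have key : (2 * (2 * c)) * (a + b * k + c * k ^ 2) = (b + 2 * k * c) ^ 2 + n := by
      linear_combination -hdisc
    have hdvd : n ∣ (2 * (2 * c)) * (a + b * k + c * k ^ 2) := by
      rw [key]
      exact dvd_add (dvd_pow hb' (by norm_num)) dvd_rfl
    have h4c : IsCoprime n (2 * (2 * c)) := (h2.mul_left h2c).symm
    exact h4c.dvd_of_dvd_mul_left hdvd
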